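/- Let f : ℝ × ℝ^n → ℝ^n, g : ℝ × ℝ^n → ℝ^{n×m} and φ : ℝ × ℝ^n → ℝ^r be infinitely differentiable. Fix k ∈ {1,…,r} and ρ_k ≥ 1, and suppose L_g L_f^i φ_k(t,x) = 0 for all (t,x) and all 0 ≤ i ≤ ρ_k − 2. Let u : I → ℝ^m be continuous on an open interval I and let x : I → ℝ^n be differentiable with ẋ(t) = f(t,x(t)) + g(t,x(t))u(t) for all t ∈ I. Suppose z_k : I → ℝ is (ρ_k−1)-times continuously differentiable, z_k(t) > 0 for all t ∈ I, and φ_k(t,x(t)) + z_k(t)²/2 = 0 for all t ∈ I. Then for every t ∈ I: z_k(t) = √(−2·φ_k(t,x(t))), and for every 1 ≤ i ≤ ρ_k − 1, z_k^{(i)}(t) = −( L_f^i φ_k(t,x(t)) + S_{k,i−1}(t) ) / z_k(t), where S_{k,i−1}(t) := (1/2)·Σ_{j=1}^{i−1} binom(i,j)·z_k^{(i−j)}(t)·z_k^{(j)}(t). -/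

import Mathlib

noncomputable section

open Real MeasureTheory Finset

/-- One-step Lie derivative of a scalar function `ψ` along the time-varying vector field `f`:
`L_f ψ (t,x) = (∂ₓ ψ)(t,x) · f(t,x) + (∂ₜ ψ)(t,x)`, expressed as the total (Fréchet)
derivative of `ψ` in the direction `(1, f(t,x))`. -/
def lieF {n : ℕ} (f : ℝ × (Fin n → ℝ) → Fin n → ℝ) (ψ : ℝ × (Fin n → ℝ) → ℝ) :
    ℝ × (Fin n → ℝ) → ℝ :=
  fun p => fderiv ℝ ψ p (1, f p)

/-- Iterated Lie derivative `L_f^j ψ`, with `L_f^0 ψ = ψ`. -/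
def lieFIter {n : ℕ} (f : ℝ × (Fin n → ℝ) → Fin n → ℝ) (ψ : ℝ × (Fin n → ℝ) → ℝ)
    (j : ℕ) : ℝ × (Fin n → ℝ) → ℝ :=
  (lieF f)^[j] ψ

/-- Mixed Lie derivative `L_g ψ (t,x) = (∂ₓ ψ)(t,x) · g(t,x) ∈ ℝ^{1×m}` as a row vector;
the `i`-th component is the derivative of `ψ` in the (space) direction of the `i`-th
column of `g`. -/
def lieG {n m : ℕ} (g : ℝ × (Fin n → ℝ) → Fin n → Fin m → ℝ)
    (ψ : ℝ × (Fin n → ℝ) → ℝ) : ℝ × (Fin n → ℝ) → Fin m → ℝ :=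
  fun p i => fderiv ℝ ψ p (0, fun a => g p a i)

/-- On an open set, the `j`-th iterated derivative of a `C^N` function has derivative
given by the `(j+1)`-st iterated derivative. -/
private lemma hasDerivAt_iterDW {p : ℝ → ℝ} {s : Set ℝ} (hs : IsOpen s)
    {N j : ℕ} (hp : ContDiffOn ℝ (N : ℕ∞) p s) (hj : j + 1 ≤ N) {t : ℝ} (ht : t ∈ s) :
    HasDerivAt (iteratedDerivWithin j p s) (iteratedDerivWithin (j + 1) p s t) t := by
  have hu : UniqueDiffOn ℝ s := hs.uniqueDiffOn
  have hd : DifferentiableOn ℝ (iteratedDerivWithin j p s) s := by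
    refine hp.differentiableOn_iteratedDerivWithin ?_ hu
    exact_mod_cast Nat.lt_of_succ_le hj
  have h1 : DifferentiableAt ℝ (iteratedDerivWithin j p s) t :=
    (hd t ht).differentiableAt (hs.mem_nhds ht)
  have h2 := h1.hasDerivAt
  rwa [show deriv (iteratedDerivWithin j p s) t = iteratedDerivWithin (j + 1) p s t from by
    rw [iteratedDerivWithin_succ, derivWithin_of_isOpen hs ht]] at h2

/-- Leibniz rule for iterated derivatives of a product on an open set. -/
private lemma leibniz_mul {s : Set ℝ} (hs : IsOpen s) {N : ℕ} {p q : ℝ → ℝ}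
    (hp : ContDiffOn ℝ (N : ℕ∞) p s) (hq : ContDiffOn ℝ (N : ℕ∞) q s) :
    ∀ i, i ≤ N → ∀ t ∈ s, iteratedDerivWithin i (fun y => p y * q y) s t
      = ∑ j ∈ Finset.range (i + 1), (i.choose j : ℝ) *
          iteratedDerivWithin (i - j) p s t * iteratedDerivWithin j q s t := by
  intro i
  induction i with
  | zero => intro _ t ht; simp
  | succ i ih =>
    intro hi t ht
    have hi' : i ≤ N := Nat.le_of_succ_le hi
    rw [iteratedDerivWithin_succ,
      derivWithin_of_isOpen hs ht]
    have heq : deriv (iteratedDerivWithin i (fun y => p y * q y) s) t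
        = deriv (fun y => ∑ j ∈ Finset.range (i + 1), (i.choose j : ℝ) *
            iteratedDerivWithin (i - j) p s y * iteratedDerivWithin j q s y) t := by
      apply Filter.EventuallyEq.deriv_eq
      filter_upwards [hs.mem_nhds ht] with y hy
      exact ih hi' y hy
    rw [heq]
    have hterm : ∀ j ∈ Finset.range (i + 1), HasDerivAt
        (fun y => (i.choose j : ℝ) * iteratedDerivWithin (i - j) p s y *
          iteratedDerivWithin j q s y)
        ((i.choose j : ℝ) * (iteratedDerivWithin (i - j + 1) p s t * iteratedDerivWithin j q s t
          + iteratedDerivWithin (i - j) p s t * iteratedDerivWithin (j + 1) q s t)) t := by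
      intro j hj
      have hj' := Finset.mem_range_succ_iff.mp hj
      have h1 := hasDerivAt_iterDW hs hp (j := i - j) (by omega) ht
      have h2 := hasDerivAt_iterDW hs hq (j := j) (by omega) ht
      have h3 := (h1.mul h2).const_mul (i.choose j : ℝ)
      simp only [mul_assoc]
      exact h3
    rw [(HasDerivAt.fun_sum hterm).deriv]
    set A : ℕ → ℝ := fun l => iteratedDerivWithin l p s t with hA
    set B : ℕ → ℝ := fun l => iteratedDerivWithin l q s t with hB
    show ∑ j ∈ Finset.range (i + 1),
        (i.choose j : ℝ) * (A (i - j + 1) * B j + A (i - j) * B (j + 1))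
      = ∑ j ∈ Finset.range (i + 2), ((i + 1).choose j : ℝ) * A (i + 1 - j) * B j
    have hsplit : ∀ j ∈ Finset.range (i + 1),
        (i.choose j : ℝ) * (A (i - j + 1) * B j + A (i - j) * B (j + 1))
        = (i.choose j : ℝ) * A (i + 1 - j) * B j
          + (i.choose j : ℝ) * A (i - j) * B (j + 1) := by
      intro j hj
      have hj' := Finset.mem_range_succ_iff.mp hj
      rw [show i - j + 1 = i + 1 - j from by omega]
      ring
    rw [Finset.sum_congr rfl hsplit, Finset.sum_add_distrib]
    have hS1 : ∑ j ∈ Finset.range (i + 1), (i.choose j : ℝ) * A (i + 1 - j) * B j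
        = A (i + 1) * B 0 + ∑ j ∈ Finset.range (i + 1),
            (i.choose (j + 1) : ℝ) * A (i - j) * B (j + 1) := by
      rw [Finset.sum_range_succ' (fun j => (i.choose j : ℝ) * A (i + 1 - j) * B j) i]
      rw [Finset.sum_range_succ (fun j => (i.choose (j + 1) : ℝ) * A (i - j) * B (j + 1)) i]
      simp only [Nat.choose_self, Nat.choose_succ_self, Nat.cast_zero, Nat.choose_zero_right,
        Nat.cast_one]
      have : ∀ j ∈ Finset.range i, (i.choose (j + 1) : ℝ) * A (i + 1 - (j + 1)) * B (j + 1)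
          = (i.choose (j + 1) : ℝ) * A (i - j) * B (j + 1) := by
        intro j hj
        rw [show i + 1 - (j + 1) = i - j from by omega]
      rw [Finset.sum_congr rfl this]
      simp only [Nat.sub_zero, one_mul, zero_mul]
      ring
    have hRHS : ∑ j ∈ Finset.range (i + 2), ((i + 1).choose j : ℝ) * A (i + 1 - j) * B j
        = A (i + 1) * B 0 + ∑ j ∈ Finset.range (i + 1),
            ((i.choose j : ℝ) + (i.choose (j + 1) : ℝ)) * A (i - j) * B (j + 1) := by
      rw [Finset.sum_range_succ' (fun j => ((i + 1).choose j : ℝ) * A (i + 1 - j) * B j) (i + 1)]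
      simp only [Nat.choose_zero_right, Nat.cast_one]
      have : ∀ j ∈ Finset.range (i + 1),
          (((i + 1).choose (j + 1) : ℕ) : ℝ) * A (i + 1 - (j + 1)) * B (j + 1)
          = ((i.choose j : ℝ) + (i.choose (j + 1) : ℝ)) * A (i - j) * B (j + 1) := by
        intro j hj
        rw [show i + 1 - (j + 1) = i - j from by omega, Nat.choose_succ_succ, Nat.cast_add]
      rw [Finset.sum_congr rfl this]
      simp only [Nat.add_comm 1 i, Nat.sub_zero, one_mul]
      ring
    rw [hS1, hRHS]
    have hcomb : ∑ j ∈ Finset.range (i + 1),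
        ((i.choose j : ℝ) + (i.choose (j + 1) : ℝ)) * A (i - j) * B (j + 1)
        = ∑ j ∈ Finset.range (i + 1), (i.choose (j + 1) : ℝ) * A (i - j) * B (j + 1)
          + ∑ j ∈ Finset.range (i + 1), (i.choose j : ℝ) * A (i - j) * B (j + 1) := by
      rw [← Finset.sum_add_distrib]
      refine Finset.sum_congr rfl fun j hj => by ring
    rw [hcomb]
    ring

private lemma lieF_contDiff {n : ℕ} {f : ℝ × (Fin n → ℝ) → Fin n → ℝ}
    {ψ : ℝ × (Fin n → ℝ) → ℝ} (hf : ContDiff ℝ (⊤ : ℕ∞) f)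
    (hψ : ContDiff ℝ (⊤ : ℕ∞) ψ) : ContDiff ℝ (⊤ : ℕ∞) (lieF f ψ) :=
  (hψ.fderiv_right (by exact_mod_cast le_top)).clm_apply (contDiff_const.prodMk hf)

private lemma lieFIter_contDiff {n : ℕ} {f : ℝ × (Fin n → ℝ) → Fin n → ℝ}
    {ψ : ℝ × (Fin n → ℝ) → ℝ} (hf : ContDiff ℝ (⊤ : ℕ∞) f)
    (hψ : ContDiff ℝ (⊤ : ℕ∞) ψ) (j : ℕ) : ContDiff ℝ (⊤ : ℕ∞) (lieFIter f ψ j) := by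
  induction j with
  | zero => exact hψ
  | succ j ih =>
    rw [lieFIter, Function.iterate_succ_apply']
    exact lieF_contDiff hf ih

private lemma chain_rule {n m : ℕ} {f : ℝ × (Fin n → ℝ) → Fin n → ℝ}
    {g : ℝ × (Fin n → ℝ) → Fin n → Fin m → ℝ}
    {ψ : ℝ × (Fin n → ℝ) → ℝ} (hψ : ContDiff ℝ (⊤ : ℕ∞) ψ)
    {u : ℝ → Fin m → ℝ} {x : ℝ → Fin n → ℝ} {t : ℝ}
    (hxt : HasDerivAt x (fun a => f (t, x t) a + ∑ i, g (t, x t) a i * u t i) t) :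
    HasDerivAt (fun s => ψ (s, x s))
      (lieF f ψ (t, x t) + ∑ i, lieG g ψ (t, x t) i * u t i) t := by
  have hcurve : HasDerivAt (fun s => (s, x s))
      ((1 : ℝ), fun a => f (t, x t) a + ∑ i, g (t, x t) a i * u t i) t :=
    (hasDerivAt_id t).prodMk hxt
  have hD : HasFDerivAt ψ (fderiv ℝ ψ (t, x t)) (t, x t) :=
    (hψ.differentiable (by simp) (t, x t)).hasFDerivAt
  have h := hD.comp_hasDerivAt t hcurve
  refine h.congr_deriv ?_
  symm
  have hsplit : ((1 : ℝ), fun a => f (t, x t) a + ∑ i, g (t, x t) a i * u t i)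
      = ((1 : ℝ), f (t, x t)) + ∑ i : Fin m, u t i • ((0 : ℝ), fun a => g (t, x t) a i) := by
    refine Prod.ext ?_ ?_
    · simp [Prod.fst_sum]
    · funext a
      simp [Prod.snd_sum, Finset.sum_apply, mul_comm]
  rw [hsplit, map_add, map_sum]
  simp only [_root_.map_smul]
  rw [lieF]
  congr 1
  refine Finset.sum_congr rfl fun i _ => ?_
  rw [lieG]
  simp [mul_comm]

/-- **Slack-variable relations (Eqs. (15) of the paper).**
If `z_k > 0` on `I` and `φ_k(t,x(t)) + z_k(t)²/2 ≡ 0` on `I`, then `z_k = √(-2 φ_k(t,x(t)))`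
and `z_k^{(i)} = -(L_f^i φ_k(t,x(t)) + S_{k,i-1}(t)) / z_k(t)` for `1 ≤ i ≤ ρ_k - 1`. -/
theorem slack_variable_relations
    {n m r : ℕ} (f : ℝ × (Fin n → ℝ) → Fin n → ℝ)
    (g : ℝ × (Fin n → ℝ) → Fin n → Fin m → ℝ)
    (φ : ℝ × (Fin n → ℝ) → Fin r → ℝ)
    (hf : ContDiff ℝ (⊤ : ℕ∞) f) (hg : ContDiff ℝ (⊤ : ℕ∞) g)
    (hφ : ContDiff ℝ (⊤ : ℕ∞) φ)
    (k : Fin r) (ρk : ℕ) (hρk : 1 ≤ ρk)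
    (hzero : ∀ i : ℕ, i + 2 ≤ ρk →
      ∀ p : ℝ × (Fin n → ℝ), lieG g (lieFIter f (fun q => φ q k) i) p = 0)
    (I : Set ℝ) (hI : IsOpen I) (hI' : I.OrdConnected)
    (u : ℝ → Fin m → ℝ) (hu : ContinuousOn u I)
    (x : ℝ → Fin n → ℝ)
    (hx : ∀ t ∈ I, HasDerivAt x
      (fun a => f (t, x t) a + ∑ i, g (t, x t) a i * u t i) t)
    (z : ℝ → ℝ) (hz : ContDiffOn ℝ ((ρk - 1 : ℕ) : ℕ∞) z I)
    (hzpos : ∀ t ∈ I, 0 < z t)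
    (hcon : ∀ t ∈ I, φ (t, x t) k + z t ^ 2 / 2 = 0) :
    ∀ t ∈ I,
      z t = Real.sqrt (-2 * φ (t, x t) k) ∧
      ∀ i : ℕ, 1 ≤ i → i ≤ ρk - 1 →
        iteratedDerivWithin i z I t =
          -(lieFIter f (fun q => φ q k) i (t, x t) +
              (1 / 2) * ∑ j ∈ Finset.Ico 1 i, (i.choose j : ℝ) *
                iteratedDerivWithin (i - j) z I t * iteratedDerivWithin j z I t) /
            z t := by
  have hΦ : ContDiff ℝ (⊤ : ℕ∞) (fun q => φ q k) := contDiff_pi.mp hφ k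
  set Φ : ℝ × (Fin n → ℝ) → ℝ := fun q => φ q k with hΦdef
  have hψ : ∀ j, ContDiff ℝ (⊤ : ℕ∞) (lieFIter f Φ j) := lieFIter_contDiff hf hΦ
  -- the `i`-th derivative of `t ↦ Φ(t, x(t))` along the trajectory is `L_f^i Φ (t, x(t))`
  have key : ∀ i, i ≤ ρk - 1 → ∀ t ∈ I,
      iteratedDerivWithin i (fun s => Φ (s, x s)) I t = lieFIter f Φ i (t, x t) := by
    intro i
    induction i with
    | zero => intro _ t ht; simp [lieFIter]
    | succ i ih =>
      intro hi t ht
      have hder : HasDerivAt (fun s => lieFIter f Φ i (s, x s))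
          (lieFIter f Φ (i + 1) (t, x t)) t := by
        have h := chain_rule (hψ i) (hx t ht)
        have hz0 : ∀ i', lieG g (lieFIter f Φ i) (t, x t) i' = 0 := fun i' => by
          have h0 := hzero i (by omega) (t, x t)
          exact congrFun h0 i'
        simp only [hz0, zero_mul, Finset.sum_const_zero, add_zero] at h
        rw [show lieFIter f Φ (i + 1) = lieF f (lieFIter f Φ i) from
          Function.iterate_succ_apply' _ _ _]
        exact h
      rw [iteratedDerivWithin_succ,
        derivWithin_of_isOpen hI ht]
      have heq : deriv (iteratedDerivWithin i (fun s => Φ (s, x s)) I) t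
          = deriv (fun s => lieFIter f Φ i (s, x s)) t := by
        apply Filter.EventuallyEq.deriv_eq
        filter_upwards [hI.mem_nhds ht] with y hy
        exact ih (by omega) y hy
      rw [heq, hder.deriv]
  have hEq : Set.EqOn (fun s => Φ (s, x s)) (fun s => -(1 / 2 : ℝ) * (z s * z s)) I := by
    intro s hs
    have h := hcon s hs
    simp only [hΦdef]
    nlinarith [h]
  have hzz : ContDiffOn ℝ ((ρk - 1 : ℕ) : ℕ∞) (fun y => z y * z y) I := hz.mul hz
  have main : ∀ i, i ≤ ρk - 1 → ∀ t ∈ I, lieFIter f Φ i (t, x t)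
      = -(1 / 2 : ℝ) * ∑ j ∈ Finset.range (i + 1), (i.choose j : ℝ) *
          iteratedDerivWithin (i - j) z I t * iteratedDerivWithin j z I t := by
    intro i hi t ht
    rw [← key i hi t ht]
    rw [iteratedDerivWithin_congr hEq ht]
    rw [iteratedDerivWithin_const_mul ht hI.uniqueDiffOn (-(1 / 2 : ℝ))
      (hzz.of_le (by exact_mod_cast hi) t ht)]
    rw [leibniz_mul hI hz hz i hi t ht]
  intro t ht
  have hzne : z t ≠ 0 := (hzpos t ht).ne'
  constructor
  · have h : -2 * φ (t, x t) k = z t ^ 2 := by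
      have := hcon t ht
      linarith
    rw [h, Real.sqrt_sq (hzpos t ht).le]
  · intro i hi1 hi2
    have hmain := main i hi2 t ht
    have hfull : ∑ j ∈ Finset.range (i + 1), (i.choose j : ℝ) *
          iteratedDerivWithin (i - j) z I t * iteratedDerivWithin j z I t
        = 2 * (z t * iteratedDerivWithin i z I t)
          + ∑ j ∈ Finset.Ico 1 i, (i.choose j : ℝ) *
              iteratedDerivWithin (i - j) z I t * iteratedDerivWithin j z I t := by
      rw [Finset.sum_range_succ, Finset.range_eq_Ico,
        Finset.sum_eq_sum_Ico_succ_bot hi1]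
      simp only [Nat.choose_self, Nat.choose_zero_right, Nat.cast_one, Nat.sub_self,
        Nat.sub_zero, iteratedDerivWithin_zero, one_mul]
      ring
    rw [hmain, hfull]
    field_simp
    ring
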